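/- arXiv:2012.04576 — 5 statements merged into one kernel-verified Lean document; each statement's English description precedes it below -/
import Mathlib

section
/- Let f: R^n → R be a convex function such that for every nonzero x ∈ R^n, lim_{β→∞} f(βx) = ∞. Then f is coercive, i.e., lim_{‖x‖→∞} f(x) = ∞. -/
open Filter

/-- Monotonicity of a convex function along rays, once the value exceeds `f 0`. -/
lemma convex_ray_mono {n : ℕ} (f : EuclideanSpace ℝ (Fin n) → ℝ)
    (hconv : ConvexOn ℝ Set.univ f) (d : EuclideanSpace ℝ (Fin n))
    {β t : ℝ} (hβ : 0 < β) (hβt : β ≤ t) (h0 : f 0 ≤ f (β • d)) :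
    f (β • d) ≤ f (t • d) := by
  have ht : 0 < t := hβ.trans_le hβt
  have hst : β / t ≤ 1 := (div_le_one ht).mpr hβt
  have hst0 : 0 < β / t := div_pos hβ ht
  have key := hconv.2 (Set.mem_univ (0 : EuclideanSpace ℝ (Fin n)))
    (Set.mem_univ (t • d)) (by linarith : (0:ℝ) ≤ 1 - β / t) hst0.le (by ring)
  have hcomb : (1 - β / t) • (0 : EuclideanSpace ℝ (Fin n)) + (β / t) • (t • d) = β • d := by
    rw [smul_zero, zero_add, smul_smul]
    congr 1
    field_simp
  rw [hcomb] at key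
  simp only [smul_eq_mul] at key
  nlinarith [key, h0]

theorem coercive_of_coercive_along_rays {n : ℕ} (f : EuclideanSpace ℝ (Fin n) → ℝ)
    (hconv : ConvexOn ℝ Set.univ f)
    (hray : ∀ x : EuclideanSpace ℝ (Fin n), x ≠ 0 →
      Tendsto (fun β : ℝ => f (β • x)) atTop atTop) :
    ∀ M : ℝ, ∃ R : ℝ, ∀ x : EuclideanSpace ℝ (Fin n), R ≤ ‖x‖ → M ≤ f x := by
  intro M
  have hcont : Continuous f :=
    continuousOn_univ.mp (hconv.continuousOn isOpen_univ)
  set M' : ℝ := max M (f 0) with hM'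
  -- for each unit vector d choose a radius β d ≥ 1 with f (β d • d) > M'
  have hchoice : ∀ d ∈ Metric.sphere (0 : EuclideanSpace ℝ (Fin n)) 1,
      ∃ β : ℝ, 1 ≤ β ∧ M' < f (β • d) := by
    intro d hd
    have hd0 : d ≠ 0 := by
      intro h
      simp [h] at hd
    obtain ⟨β₀, hβ₀⟩ := (tendsto_atTop.mp (hray d hd0) (M' + 1)).exists_forall_of_atTop
    refine ⟨max β₀ 1, le_max_right _ _, ?_⟩
    have := hβ₀ (max β₀ 1) (le_max_left _ _)
    linarith
  choose! β hβ1 hβf using hchoice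
  -- open cover of the sphere
  have hcover : Metric.sphere (0 : EuclideanSpace ℝ (Fin n)) 1 ⊆
      ⋃ d ∈ Metric.sphere (0 : EuclideanSpace ℝ (Fin n)) 1,
        {e | M' < f (β d • e)} := by
    intro d hd
    exact Set.mem_biUnion hd (hβf d hd)
  obtain ⟨s, hs_sub, hs_fin, hs_cover⟩ := (isCompact_sphere (0 : EuclideanSpace ℝ (Fin n)) 1)
    |>.elim_finite_subcover_image
      (fun d _ => (isOpen_lt continuous_const (hcont.comp (continuous_const_smul _))))
      hcover
  -- R = max of the β's over the finite subcover, at least 1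
  obtain ⟨B, hB⟩ := (hs_fin.image β).bddAbove
  obtain ⟨R, hR1, hRmax⟩ : ∃ R : ℝ, 1 ≤ R ∧ ∀ d ∈ s, β d ≤ R :=
    ⟨max 1 B, le_max_left _ _, fun d hd =>
      (hB (Set.mem_image_of_mem β hd)).trans (le_max_right _ _)⟩
  refine ⟨R, fun x hx => ?_⟩
  have hx1 : (1:ℝ) ≤ ‖x‖ := hR1.trans hx
  have hx0 : x ≠ 0 := by
    intro h
    rw [h, norm_zero] at hx1
    linarith
  set d : EuclideanSpace ℝ (Fin n) := ‖x‖⁻¹ • x with hd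
  have hdS : d ∈ Metric.sphere (0 : EuclideanSpace ℝ (Fin n)) 1 := by
    simp [hd, norm_smul, abs_of_nonneg (inv_nonneg.mpr (norm_nonneg x)),
      inv_mul_cancel₀ (norm_ne_zero_iff.mpr hx0)]
  obtain ⟨i, his, hid⟩ : ∃ i ∈ s, d ∈ {e | M' < f (β i • e)} := by
    have := hs_cover hdS
    simpa using this
  have hiS : i ∈ Metric.sphere (0 : EuclideanSpace ℝ (Fin n)) 1 := hs_sub his
  have hβi : (1:ℝ) ≤ β i := hβ1 i hiS
  have hfd : M' < f (β i • d) := hid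
  have hmono := convex_ray_mono f hconv d (by linarith : (0:ℝ) < β i)
    (le_trans (hRmax i his) hx)
    (by
      have : f 0 ≤ M' := le_max_right _ _
      linarith)
  have hxd : ‖x‖ • d = x := by
    rw [hd, smul_smul, mul_inv_cancel₀ (norm_ne_zero_iff.mpr hx0), one_smul]
  rw [hxd] at hmono
  calc M ≤ M' := le_max_left _ _
    _ ≤ f (β i • d) := hfd.le
    _ ≤ f x := hmono
end

section
/- For any probability vector y ∈ R^C with strictly positive entries, the smallest eigenvalue of the restriction of Q = diag(y) − y yᵀ to the hyperplane 𝟙^⊥ is at least min_i y_i; that is, vᵀ Q v ≥ (min_i y_i)·‖v‖² for every v ∈ R^C orthogonal to 𝟙. -/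
open Matrix

theorem Q_lower_bound_on_hyperplane {C : ℕ} (hC : 0 < C) (y : Fin C → ℝ)
    (hy0 : ∀ i, 0 < y i) (hy1 : ∑ i, y i = 1)
    (Q : Matrix (Fin C) (Fin C) ℝ)
    (hQ : Q = Matrix.diagonal y - Matrix.vecMulVec y y) :
    ∀ v : Fin C → ℝ, ∑ i, v i = 0 →
      (Finset.univ.inf' (Finset.univ_nonempty_iff.mpr ⟨⟨0, hC⟩⟩) y) * (∑ i, v i ^ 2)
        ≤ v ⬝ᵥ Q.mulVec v := by
  intro v hv
  have hne : (Finset.univ : Finset (Fin C)).Nonempty :=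
    Finset.univ_nonempty_iff.mpr ⟨⟨0, hC⟩⟩
  set m := Finset.univ.inf' hne y with hm
  have hmle : ∀ i, m ≤ y i := fun i => Finset.inf'_le _ (Finset.mem_univ i)
  have hm0 : 0 < m := by
    obtain ⟨i, -, hi⟩ := Finset.exists_mem_eq_inf' hne y
    rw [← hm] at hi; rw [hi]; exact hy0 i
  -- quadratic form
  have hQv : v ⬝ᵥ Q.mulVec v = (∑ i, y i * v i ^ 2) - (∑ i, y i * v i) ^ 2 := by
    subst hQ
    have h1 : v ⬝ᵥ (Matrix.diagonal y).mulVec v = ∑ i, y i * v i ^ 2 := by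
      simp only [dotProduct, mulVec_diagonal]
      apply Finset.sum_congr rfl
      intro i _
      ring
    have h2 : v ⬝ᵥ (Matrix.vecMulVec y y).mulVec v = (∑ i, y i * v i) ^ 2 := by
      simp only [dotProduct, mulVec, vecMulVec, of_apply, sq, Finset.sum_mul,
        Finset.mul_sum]
      apply Finset.sum_congr rfl
      intro i _
      apply Finset.sum_congr rfl
      intro j _
      ring
    rw [sub_mulVec, dotProduct_sub, h1, h2]
  set w := fun i => y i - m with hw
  have hw0 : ∀ i, 0 ≤ w i := fun i => sub_nonneg.mpr (hmle i)
  have hsw : ∑ i, w i = 1 - C * m := by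
    simp [hw, Finset.sum_sub_distrib, hy1]
  have hsw0 : 0 ≤ ∑ i, w i := Finset.sum_nonneg fun i _ => hw0 i
  have hsw1 : ∑ i, w i ≤ 1 := by
    rw [hsw]
    have : (0:ℝ) ≤ C * m := by positivity
    linarith
  have hyw : ∑ i, y i * v i = ∑ i, w i * v i := by
    simp only [hw, sub_mul, Finset.sum_sub_distrib, ← Finset.mul_sum, hv, mul_zero,
      sub_zero]
  have hwv2 : 0 ≤ ∑ i, w i * v i ^ 2 :=
    Finset.sum_nonneg fun i _ => mul_nonneg (hw0 i) (sq_nonneg _)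
  have hCS : (∑ i, w i * v i) ^ 2 ≤ (∑ i, w i) * (∑ i, w i * v i ^ 2) := by
    have h := Finset.sum_mul_sq_le_sq_mul_sq Finset.univ
      (fun i => Real.sqrt (w i)) (fun i => Real.sqrt (w i) * v i)
    have e1 : ∀ i, Real.sqrt (w i) * (Real.sqrt (w i) * v i) = w i * v i := by
      intro i
      rw [← mul_assoc, Real.mul_self_sqrt (hw0 i)]
    have e2 : ∀ i, Real.sqrt (w i) ^ 2 = w i := fun i => Real.sq_sqrt (hw0 i)
    have e3 : ∀ i, (Real.sqrt (w i) * v i) ^ 2 = w i * v i ^ 2 := by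
      intro i
      rw [mul_pow, e2]
    simpa only [e1, e2, e3] using h
  have hkey : (∑ i, w i * v i) ^ 2 ≤ ∑ i, w i * v i ^ 2 := by
    calc (∑ i, w i * v i) ^ 2 ≤ (∑ i, w i) * (∑ i, w i * v i ^ 2) := hCS
      _ ≤ 1 * (∑ i, w i * v i ^ 2) := by
          exact mul_le_mul_of_nonneg_right hsw1 hwv2
      _ = ∑ i, w i * v i ^ 2 := one_mul _
  have hsplit : ∑ i, w i * v i ^ 2 = (∑ i, y i * v i ^ 2) - m * ∑ i, v i ^ 2 := by
    simp only [hw, sub_mul, Finset.sum_sub_distrib, ← Finset.mul_sum]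
  rw [hQv, hyw]
  linarith [hkey, hsplit]
end

section
/- Suppose T has all entries strictly positive, N = D, and X ∈ R^{D×D} is invertible. Then the cross-entropy loss L has a global minimum, and every minimizer is of the form W = R X^{-1} + 𝟙 cᵀ with R = ln(T) (elementwise logarithm) and arbitrary c ∈ R^D. Exactly one minimizer has all column means zero, namely W = (I − (1/C) 𝟙𝟙ᵀ) R X^{-1}. -/
open Matrix

noncomputable def softmax {C : ℕ} (u : Fin C → ℝ) : Fin C → ℝ :=
  fun i => Real.exp (u i) / ∑ j, Real.exp (u j)

noncomputable def crossEntropyLoss {C D N : ℕ}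
    (X : Matrix (Fin D) (Fin N) ℝ) (T : Matrix (Fin C) (Fin N) ℝ)
    (W : Matrix (Fin C) (Fin D) ℝ) : ℝ :=
  -∑ n, ∑ i, T i n * Real.log (softmax (W.mulVec fun d => X d n) i)

lemma softmax_pos {C : ℕ} (u : Fin C → ℝ) (i : Fin C) : 0 < softmax u i :=
  div_pos (Real.exp_pos _) (Finset.sum_pos (fun j _ => Real.exp_pos (u j)) ⟨i, Finset.mem_univ i⟩)

lemma softmax_sum {C : ℕ} (hC : 0 < C) (u : Fin C → ℝ) : ∑ i, softmax u i = 1 := by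
  have h : 0 < ∑ j, Real.exp (u j) := by
    haveI : NeZero C := ⟨hC.ne'⟩
    exact Finset.sum_pos (fun j _ => Real.exp_pos _) Finset.univ_nonempty
  unfold softmax
  rw [← Finset.sum_div, div_self h.ne']

lemma gibbs_term {t s : ℝ} (ht : 0 < t) (hs : 0 < s) :
    t * Real.log s ≤ t * Real.log t + (s - t) := by
  have hlog : Real.log (s / t) ≤ s / t - 1 := Real.log_le_sub_one_of_pos (div_pos hs ht)
  have h2 := mul_le_mul_of_nonneg_left hlog ht.le
  rw [Real.log_div hs.ne' ht.ne'] at h2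
  have h3 : t * (s / t - 1) = s - t := by field_simp
  nlinarith

lemma gibbs_term_lt {t s : ℝ} (ht : 0 < t) (hs : 0 < s) (hne : s ≠ t) :
    t * Real.log s < t * Real.log t + (s - t) := by
  have h1 : s / t ≠ 1 := by
    intro h; exact hne (by field_simp at h; linarith)
  have hlog : Real.log (s / t) < s / t - 1 := Real.log_lt_sub_one_of_pos (div_pos hs ht) h1
  have h2 := mul_lt_mul_of_pos_left hlog ht
  rw [Real.log_div hs.ne' ht.ne'] at h2
  have h3 : t * (s / t - 1) = s - t := by field_simp
  nlinarith

lemma gibbs_le {C : ℕ} (t s : Fin C → ℝ) (ht : ∀ i, 0 < t i) (hs : ∀ i, 0 < s i)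
    (ht1 : ∑ i, t i = 1) (hs1 : ∑ i, s i = 1) :
    -∑ i, t i * Real.log (t i) ≤ -∑ i, t i * Real.log (s i) := by
  have h := Finset.sum_le_sum (s := Finset.univ)
    (fun i _ => gibbs_term (ht i) (hs i))
  rw [Finset.sum_add_distrib, Finset.sum_sub_distrib, ht1, hs1] at h
  linarith

lemma gibbs_lt {C : ℕ} (t s : Fin C → ℝ) (ht : ∀ i, 0 < t i) (hs : ∀ i, 0 < s i)
    (ht1 : ∑ i, t i = 1) (hs1 : ∑ i, s i = 1) (hne : s ≠ t) :
    -∑ i, t i * Real.log (t i) < -∑ i, t i * Real.log (s i) := by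
  obtain ⟨i0, hi0⟩ : ∃ i, s i ≠ t i := by
    by_contra h; push_neg at h; exact hne (funext h)
  have h := Finset.sum_lt_sum (s := Finset.univ)
    (fun i _ => gibbs_term (ht i) (hs i))
    ⟨i0, Finset.mem_univ i0, gibbs_term_lt (ht i0) (hs i0) hi0⟩
  rw [Finset.sum_add_distrib, Finset.sum_sub_distrib, ht1, hs1] at h
  linarith

lemma softmax_eq_iff {C : ℕ} (hC : 0 < C) (t : Fin C → ℝ) (ht : ∀ i, 0 < t i)
    (ht1 : ∑ i, t i = 1) (u : Fin C → ℝ) :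
    softmax u = t ↔ ∃ k, ∀ i, u i = Real.log (t i) + k := by
  have hS : 0 < ∑ j, Real.exp (u j) := by
    haveI : NeZero C := ⟨hC.ne'⟩
    exact Finset.sum_pos (fun j _ => Real.exp_pos _) Finset.univ_nonempty
  constructor
  · intro h
    refine ⟨Real.log (∑ j, Real.exp (u j)), fun i => ?_⟩
    have h1 : Real.exp (u i) / ∑ j, Real.exp (u j) = t i := congrFun h i
    have h2 : Real.exp (u i) = t i * ∑ j, Real.exp (u j) := by
      field_simp at h1; linarith
    have h3 := congrArg Real.log h2
    rw [Real.log_exp, Real.log_mul (ht i).ne' hS.ne'] at h3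
    exact h3
  · rintro ⟨k, hk⟩
    funext i
    unfold softmax
    have hsum : ∑ j, Real.exp (u j) = Real.exp k := by
      simp only [hk, Real.exp_add, Real.exp_log (ht _)]
      rw [← Finset.sum_mul, ht1, one_mul]
    rw [hsum, hk i, Real.exp_add, Real.exp_log (ht i),
      mul_div_assoc, div_self (Real.exp_ne_zero k), mul_one]

set_option maxHeartbeats 1000000 in
theorem minimum_invertible_case {C D : ℕ} (hC : 0 < C)
    (X : Matrix (Fin D) (Fin D) ℝ) (hX : IsUnit X.det)
    (T : Matrix (Fin C) (Fin D) ℝ)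
    (hT : ∀ i n, 0 < T i n) (hT1 : ∀ n, ∑ i, T i n = 1)
    (R : Matrix (Fin C) (Fin D) ℝ) (hR : R = Matrix.of fun i n => Real.log (T i n))
    (W₀ : Matrix (Fin C) (Fin D) ℝ)
    (hW₀ : W₀ = (1 - (C : ℝ)⁻¹ • Matrix.of (fun (_ : Fin C) (_ : Fin C) => (1 : ℝ)))
        * (R * X⁻¹)) :
    (∃ W, ∀ W', crossEntropyLoss X T W ≤ crossEntropyLoss X T W') ∧
    (∀ W, (∀ W', crossEntropyLoss X T W ≤ crossEntropyLoss X T W') ↔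
        ∃ c : Fin D → ℝ, W = R * X⁻¹ + Matrix.of fun _ d => c d) ∧
    (∀ W', crossEntropyLoss X T W₀ ≤ crossEntropyLoss X T W') ∧
    (∀ d, ∑ i, W₀ i d = 0) ∧
    (∀ W, (∀ W', crossEntropyLoss X T W ≤ crossEntropyLoss X T W') →
        (∀ d, ∑ i, W i d = 0) → W = W₀) := by
  have hCne : (C : ℝ) ≠ 0 := Nat.cast_ne_zero.mpr hC.ne'
  set A := R * X⁻¹ with hA
  have hAX : A * X = R := by
    rw [hA, Matrix.mul_assoc, Matrix.nonsing_inv_mul X hX, Matrix.mul_one]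
  set m := ∑ n, -∑ i, T i n * Real.log (T i n) with hm
  have hu : ∀ (W : Matrix (Fin C) (Fin D) ℝ) (n : Fin D),
      (W.mulVec fun d => X d n) = fun i => (W * X) i n := by
    intro W n; funext i; rw [Matrix.mulVec, dotProduct, Matrix.mul_apply]
  have hL : ∀ W, crossEntropyLoss X T W
      = ∑ n, -∑ i, T i n * Real.log (softmax (fun i => (W * X) i n) i) := by
    intro W
    unfold crossEntropyLoss
    rw [← Finset.sum_neg_distrib]
    exact Finset.sum_congr rfl fun n _ => by rw [hu W n]
  -- lower bound
  have hm_le : ∀ W, m ≤ crossEntropyLoss X T W := by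
    intro W
    rw [hL, hm]
    exact Finset.sum_le_sum fun n _ => gibbs_le (fun i => T i n) _
      (fun i => hT i n) (fun i => softmax_pos _ i) (hT1 n) (softmax_sum hC _)
  -- characterization of equality
  have hchar : ∀ W, crossEntropyLoss X T W = m ↔
      ∀ n, softmax (fun i => (W * X) i n) = fun i => T i n := by
    intro W
    constructor
    · intro hW
      by_contra h
      push_neg at h
      obtain ⟨n0, hn0⟩ := h
      have hlt : m < crossEntropyLoss X T W := by
        rw [hL, hm]
        exact Finset.sum_lt_sum
          (fun n _ => gibbs_le (fun i => T i n) _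
            (fun i => hT i n) (fun i => softmax_pos _ i) (hT1 n) (softmax_sum hC _))
          ⟨n0, Finset.mem_univ n0, gibbs_lt (fun i => T i n0) _
            (fun i => hT i n0) (fun i => softmax_pos _ i) (hT1 n0) (softmax_sum hC _) hn0⟩
      linarith [hlt, hW.le]
    · intro h
      rw [hL, hm]
      exact Finset.sum_congr rfl fun n _ => by rw [h n]
  -- A is a minimizer
  have hLA : crossEntropyLoss X T A = m := by
    apply (hchar A).mpr
    intro n
    apply (softmax_eq_iff hC (fun i => T i n) (fun i => hT i n) (hT1 n) _).mpr
    exact ⟨0, fun i => by rw [hAX, hR]; simp⟩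
  have hmin_iff : ∀ W, (∀ W', crossEntropyLoss X T W ≤ crossEntropyLoss X T W')
      ↔ crossEntropyLoss X T W = m := by
    intro W
    constructor
    · intro h
      exact le_antisymm (hLA ▸ h A) (hm_le W)
    · intro h W'
      rw [h]; exact hm_le W'
  -- form of minimizers
  have hform : ∀ W, crossEntropyLoss X T W = m ↔
      ∃ c : Fin D → ℝ, W = A + Matrix.of fun _ d => c d := by
    intro W
    constructor
    · intro hW
      have h1 := (hchar W).mp hW
      have h2 : ∀ n, ∃ k, ∀ i, (W * X) i n = Real.log (T i n) + k := fun n =>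
        (softmax_eq_iff hC (fun i => T i n) (fun i => hT i n) (hT1 n) _).mp (h1 n)
      choose k hk using h2
      refine ⟨fun d => ∑ n, k n * X⁻¹ n d, ?_⟩
      have hWX : W * X = R + Matrix.of (fun (_ : Fin C) n => k n) := by
        ext i n
        rw [Matrix.add_apply, hk n i, hR]
        simp
      have hW2 : W = (R + Matrix.of fun (_ : Fin C) n => k n) * X⁻¹ := by
        rw [← hWX, Matrix.mul_assoc, Matrix.mul_nonsing_inv X hX, Matrix.mul_one]
      have hE : Matrix.of (fun (_ : Fin C) n => k n) * X⁻¹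
          = Matrix.of fun (_ : Fin C) d => ∑ n, k n * X⁻¹ n d := by
        ext i d; simp [Matrix.mul_apply]
      rw [hW2, Matrix.add_mul, hE, hA]
    · rintro ⟨c, rfl⟩
      apply (hchar _).mpr
      intro n
      apply (softmax_eq_iff hC (fun i => T i n) (fun i => hT i n) (hT1 n) _).mpr
      refine ⟨∑ d, c d * X d n, fun i => ?_⟩
      rw [Matrix.add_mul, Matrix.add_apply, hAX, hR]
      simp [Matrix.mul_apply]
  -- W₀ in standard form
  have hW₀' : W₀ = A + Matrix.of fun (_ : Fin C) d => -(C : ℝ)⁻¹ * ∑ j, A j d := by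
    rw [hW₀, Matrix.sub_mul, Matrix.one_mul, Matrix.smul_mul]
    ext i d
    simp only [Matrix.sub_apply, Matrix.add_apply, Matrix.smul_apply, Matrix.mul_apply,
      Matrix.of_apply, one_mul, smul_eq_mul]
    ring
  have hW₀min : crossEntropyLoss X T W₀ = m := by
    rw [hform]
    exact ⟨_, hW₀'⟩
  have hsum_of : ∀ (c : Fin D → ℝ) (d : Fin D),
      ∑ i : Fin C, (A + Matrix.of fun (_ : Fin C) d => c d) i d
        = (∑ i, A i d) + (C : ℝ) * c d := by
    intro c d
    simp [Matrix.add_apply, Finset.sum_add_distrib, Finset.sum_const,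
      Fintype.card_fin, nsmul_eq_mul]
  have hW₀sum : ∀ d, ∑ i, W₀ i d = 0 := by
    intro d
    rw [hW₀', hsum_of]
    field_simp
    ring
  refine ⟨⟨A, fun W' => hLA ▸ hm_le W'⟩, fun W => (hmin_iff W).trans (hform W),
    fun W' => hW₀min ▸ hm_le W', hW₀sum, ?_⟩
  intro W hmin hsum
  obtain ⟨c, hWc⟩ := (hform W).mp ((hmin_iff W).mp hmin)
  rw [hWc, hW₀']
  congr 1
  ext i d
  simp only [Matrix.of_apply]
  have h := hsum d
  rw [hWc, hsum_of] at h
  have h2 : (C : ℝ) * c d = -∑ j, A j d := by linarith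
  calc c d = (C : ℝ)⁻¹ * ((C : ℝ) * c d) := by field_simp
  _ = -(C : ℝ)⁻¹ * ∑ j, A j d := by rw [h2]; ring
end

section
/- Suppose T > 0 (all entries strictly positive) and rank(X) = D. Then for every nonzero W ∈ Z = {W ∈ R^{C×D} : 𝟙ᵀW = 0}, lim_{β→∞} L(βW) = ∞; consequently L restricted to Z attains a unique global minimum. -/
open Matrix Filter

lemma loss_eq {C D N : ℕ} (hC : 0 < C)
    (X : Matrix (Fin D) (Fin N) ℝ) (T : Matrix (Fin C) (Fin N) ℝ)
    (hT1 : ∀ n, ∑ i, T i n = 1) (W : Matrix (Fin C) (Fin D) ℝ) :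
    crossEntropyLoss X T W = ∑ n,
      (Real.log (∑ i, Real.exp (W.mulVec (fun d => X d n) i))
        - ∑ i, T i n * W.mulVec (fun d => X d n) i) := by
  haveI : Nonempty (Fin C) := Fin.pos_iff_nonempty.mp hC
  unfold crossEntropyLoss softmax
  rw [← Finset.sum_neg_distrib]
  apply Finset.sum_congr rfl
  intro n _
  have hS : (0:ℝ) < ∑ i, Real.exp (W.mulVec (fun d => X d n) i) :=
    Finset.sum_pos (fun i _ => Real.exp_pos _) Finset.univ_nonempty
  have : ∀ i : Fin C, Real.log (Real.exp (W.mulVec (fun d => X d n) i) /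
      ∑ j, Real.exp (W.mulVec (fun d => X d n) j))
      = W.mulVec (fun d => X d n) i - Real.log (∑ j, Real.exp (W.mulVec (fun d => X d n) j)) := by
    intro i
    rw [Real.log_div (Real.exp_ne_zero _) hS.ne', Real.log_exp]
  simp only [this, mul_sub]
  rw [Finset.sum_sub_distrib, ← Finset.sum_mul, hT1 n, one_mul]
  ring

lemma term_lb {C : ℕ} (hC : 0 < C) (t u : Fin C → ℝ) (ε : ℝ) (hε0 : 0 ≤ ε)
    (hε : ∀ i, ε ≤ t i) (ht1 : ∑ i, t i = 1) (hu : ∑ i, u i = 0) (j : Fin C) :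
    ε * |u j| ≤ Real.log (∑ i, Real.exp (u i)) - ∑ i, t i * u i := by
  haveI : Nonempty (Fin C) := Fin.pos_iff_nonempty.mp hC
  obtain ⟨k, -, hk⟩ := Finset.exists_max_image Finset.univ u Finset.univ_nonempty
  obtain ⟨m, -, hm⟩ := Finset.exists_min_image Finset.univ u Finset.univ_nonempty
  simp only [Finset.mem_univ, forall_true_left] at hk hm
  have hk' : ∀ i, u i ≤ u k := hk
  have hm' : ∀ i, u m ≤ u i := hm
  -- max ≥ 0, min ≤ 0
  have hk0 : 0 ≤ u k := by
    by_contra h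
    push_neg at h
    have : ∑ i, u i < 0 := Finset.sum_neg (fun i _ => lt_of_le_of_lt (hk' i) h) Finset.univ_nonempty
    linarith [hu ▸ this]
  have hm0 : u m ≤ 0 := by
    by_contra h
    push_neg at h
    have : 0 < ∑ i, u i := Finset.sum_pos (fun i _ => lt_of_lt_of_le h (hm' i)) Finset.univ_nonempty
    linarith [hu ▸ this]
  -- log sum exp ≥ u k
  have hlse : u k ≤ Real.log (∑ i, Real.exp (u i)) := by
    have h1 : Real.exp (u k) ≤ ∑ i, Real.exp (u i) :=
      Finset.single_le_sum (fun i _ => (Real.exp_pos _).le) (Finset.mem_univ k)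
    calc u k = Real.log (Real.exp (u k)) := (Real.log_exp _).symm
    _ ≤ _ := Real.log_le_log (Real.exp_pos _) h1
  -- linear part ≤ u k - ε (u k - u m)
  have hlin : ∑ i, t i * u i ≤ u k - ε * (u k - u m) := by
    have h2 : ∑ i ∈ Finset.univ.erase m, t i * u i ≤ ∑ i ∈ Finset.univ.erase m, t i * u k := by
      apply Finset.sum_le_sum
      intro i _
      exact mul_le_mul_of_nonneg_left (hk' i) (le_trans hε0 (hε i))
    have h3 : ∑ i ∈ Finset.univ.erase m, t i = 1 - t m := by
      rw [← ht1]
      rw [Finset.sum_erase_eq_sub (Finset.mem_univ m)]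
    have h4 : ∑ i, t i * u i = (∑ i ∈ Finset.univ.erase m, t i * u i) + t m * u m := by
      rw [Finset.sum_erase_add _ _ (Finset.mem_univ m)]
    rw [h4]
    rw [← Finset.sum_mul] at h2
    refine le_trans (add_le_add h2 le_rfl) ?_
    have h5 : t m * (u k - u m) ≥ ε * (u k - u m) :=
      mul_le_mul_of_nonneg_right (hε m) (by linarith [hk' m])
    calc (∑ i ∈ Finset.univ.erase m, t i) * u k + t m * u m
        ≤ (1 - t m) * u k + t m * u m := by rw [h3]
      _ = u k - t m * (u k - u m) := by ring
      _ ≤ u k - ε * (u k - u m) := by linarith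
  -- combine: |u j| ≤ u k - u m
  have habs : |u j| ≤ u k - u m := by
    rw [abs_le]
    constructor <;> [linarith [hm' j, hk0]; linarith [hk' j, hm0]]
  nlinarith [mul_le_mul_of_nonneg_left habs hε0]


lemma mul_X_inj {C D N : ℕ} (X : Matrix (Fin D) (Fin N) ℝ) (hX : X.rank = D)
    (W : Matrix (Fin C) (Fin D) ℝ) (hW : W * X = 0) : W = 0 := by
  have hsurj : Function.Surjective X.mulVecLin := by
    rw [← LinearMap.range_eq_top]
    apply Submodule.eq_top_of_finrank_eq
    rw [show Module.finrank ℝ ↥(LinearMap.range X.mulVecLin) = X.rank from rfl, hX]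
    simp [Module.finrank_fintype_fun_eq_card]
  have h1 : ∀ z, W.mulVec z = 0 := by
    intro z
    obtain ⟨v, hv⟩ := hsurj z
    have : X.mulVec v = z := hv
    rw [← this, Matrix.mulVec_mulVec, hW, Matrix.zero_mulVec]
  ext i d
  have := congrFun (h1 (Pi.single d 1)) i
  simpa [Matrix.mulVec_single] using this

lemma lse_mid {C : ℕ} (hC : 0 < C) (a b : Fin C → ℝ) (hab : a ≠ b)
    (ha : ∑ i, a i = 0) (hb : ∑ i, b i = 0) :
    Real.log (∑ i, Real.exp ((a i + b i) / 2)) <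
      (Real.log (∑ i, Real.exp (a i)) + Real.log (∑ i, Real.exp (b i))) / 2 := by
  haveI : Nonempty (Fin C) := Fin.pos_iff_nonempty.mp hC
  set x : EuclideanSpace ℝ (Fin C) := WithLp.toLp 2 (fun i => Real.exp (a i / 2)) with hx
  set y : EuclideanSpace ℝ (Fin C) := WithLp.toLp 2 (fun i => Real.exp (b i / 2)) with hy
  have hxn : ‖x‖ = Real.sqrt (∑ i, Real.exp (a i)) := by
    rw [EuclideanSpace.norm_eq]
    congr 1
    apply Finset.sum_congr rfl
    intro i _
    rw [Real.norm_eq_abs, abs_of_pos (Real.exp_pos _), sq, ← Real.exp_add]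
    ring_nf
  have hyn : ‖y‖ = Real.sqrt (∑ i, Real.exp (b i)) := by
    rw [EuclideanSpace.norm_eq]
    congr 1
    apply Finset.sum_congr rfl
    intro i _
    rw [Real.norm_eq_abs, abs_of_pos (Real.exp_pos _), sq, ← Real.exp_add]
    ring_nf
  have hinner : (inner ℝ x y : ℝ) = ∑ i, Real.exp ((a i + b i) / 2) := by
    rw [@PiLp.inner_apply]
    apply Finset.sum_congr rfl
    intro i _
    simp only [RCLike.inner_apply, conj_trivial, hx, hy, PiLp.toLp_apply]
    rw [← Real.exp_add]
    ring_nf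
  have hCS : (inner ℝ x y : ℝ) < ‖x‖ * ‖y‖ := by
    rcases lt_or_eq_of_le (real_inner_le_norm x y) with h | h
    · exact h
    · exfalso
      rw [inner_eq_norm_mul_iff_real] at h
      -- ‖y‖ • x = ‖x‖ • y, both positive vectors, deduce a = b
      have hxpos : (0:ℝ) < ‖x‖ := by
        rw [hxn]
        exact Real.sqrt_pos.mpr (Finset.sum_pos (fun i _ => Real.exp_pos _) Finset.univ_nonempty)
      have hypos : (0:ℝ) < ‖y‖ := by
        rw [hyn]
        exact Real.sqrt_pos.mpr (Finset.sum_pos (fun i _ => Real.exp_pos _) Finset.univ_nonempty)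
      have hconst : ∀ i, a i - b i = 2 * Real.log (‖x‖ / ‖y‖) := by
        intro i
        have := congrArg (fun z : EuclideanSpace ℝ (Fin C) => z i) h
        simp only [PiLp.smul_apply, smul_eq_mul, hx, hy, PiLp.toLp_apply] at this
        have h2 : Real.exp (a i / 2) / Real.exp (b i / 2) = ‖x‖ / ‖y‖ := by
          field_simp at this ⊢
          linarith [this]
        rw [← Real.exp_sub] at h2
        have := congrArg Real.log h2
        rw [Real.log_exp] at this
        linarith [this]
      have hsum : ∑ i, (a i - b i) = 0 := by rw [Finset.sum_sub_distrib, ha, hb]; ring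
      have : (C : ℝ) * (2 * Real.log (‖x‖ / ‖y‖)) = 0 := by
        rw [← hsum]
        rw [Finset.sum_congr rfl (fun i _ => hconst i)]
        simp [mul_comm]
      have hlog0 : 2 * Real.log (‖x‖ / ‖y‖) = 0 := by
        have hCne : (C:ℝ) ≠ 0 := Nat.cast_ne_zero.mpr hC.ne'
        exact (mul_eq_zero.mp this).resolve_left hCne
      apply hab
      funext i
      have := hconst i
      rw [hlog0] at this
      linarith
  rw [← hinner]
  have hsum_pos : (0:ℝ) < ∑ i, Real.exp ((a i + b i)/2) :=
    Finset.sum_pos (fun i _ => Real.exp_pos _) Finset.univ_nonempty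
  calc Real.log ((inner ℝ x y : ℝ)) < Real.log (‖x‖ * ‖y‖) := by
        apply Real.log_lt_log _ hCS
        rw [hinner]; exact hsum_pos
    _ = Real.log ‖x‖ + Real.log ‖y‖ := by
        apply Real.log_mul
        · rw [hxn]
          exact (Real.sqrt_pos.mpr (Finset.sum_pos (fun i _ => Real.exp_pos _) Finset.univ_nonempty)).ne'
        · rw [hyn]
          exact (Real.sqrt_pos.mpr (Finset.sum_pos (fun i _ => Real.exp_pos _) Finset.univ_nonempty)).ne'
    _ = (Real.log (∑ i, Real.exp (a i)) + Real.log (∑ i, Real.exp (b i))) / 2 := by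
        rw [hxn, hyn, Real.log_sqrt, Real.log_sqrt]
        · ring
        · positivity
        · positivity


lemma mid_term_lt {C : ℕ} (hC : 0 < C) (t a b : Fin C → ℝ) (hab : a ≠ b)
    (ha : ∑ i, a i = 0) (hb : ∑ i, b i = 0) :
    (Real.log (∑ i, Real.exp ((a i + b i) / 2)) - ∑ i, t i * ((a i + b i) / 2))
      < ((Real.log (∑ i, Real.exp (a i)) - ∑ i, t i * a i)
        + (Real.log (∑ i, Real.exp (b i)) - ∑ i, t i * b i)) / 2 := by
  have hlin : ∑ i, t i * ((a i + b i) / 2) = ((∑ i, t i * a i) + (∑ i, t i * b i)) / 2 := by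
    rw [← Finset.sum_add_distrib, Finset.sum_div]
    apply Finset.sum_congr rfl
    intro i _
    ring
  have := lse_mid hC a b hab ha hb
  rw [hlin]
  linarith

lemma mid_term_le {C : ℕ} (hC : 0 < C) (t a b : Fin C → ℝ)
    (ha : ∑ i, a i = 0) (hb : ∑ i, b i = 0) :
    (Real.log (∑ i, Real.exp ((a i + b i) / 2)) - ∑ i, t i * ((a i + b i) / 2))
      ≤ ((Real.log (∑ i, Real.exp (a i)) - ∑ i, t i * a i)
        + (Real.log (∑ i, Real.exp (b i)) - ∑ i, t i * b i)) / 2 := by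
  rcases eq_or_ne a b with he | he
  · subst he
    have h2 : ∀ x : ℝ, (x + x) / 2 = x := fun x => by ring
    simp only [h2]
    apply le_of_eq
    ring
  · exact (mid_term_lt hC t a b he ha hb).le


attribute [local instance] Matrix.normedAddCommGroup Matrix.normedSpace

theorem existence_of_minimum_rank_D {C D N : ℕ}
    (X : Matrix (Fin D) (Fin N) ℝ) (hX : X.rank = D)
    (T : Matrix (Fin C) (Fin N) ℝ)
    (hT : ∀ i n, 0 < T i n) (hT1 : ∀ n, ∑ i, T i n = 1) :
    (∀ W : Matrix (Fin C) (Fin D) ℝ, (∀ d, ∑ i, W i d = 0) → W ≠ 0 →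
        Tendsto (fun β : ℝ => crossEntropyLoss X T (β • W)) atTop atTop) ∧
    (∃! W : Matrix (Fin C) (Fin D) ℝ, (∀ d, ∑ i, W i d = 0) ∧
        ∀ W' : Matrix (Fin C) (Fin D) ℝ, (∀ d, ∑ i, W' i d = 0) →
          crossEntropyLoss X T W ≤ crossEntropyLoss X T W') := by
  rcases Nat.eq_zero_or_pos D with hD | hD
  · -- degenerate case D = 0 : all matrices are equal
    subst hD
    have hsub : ∀ A B : Matrix (Fin C) (Fin 0) ℝ, A = B := by
      intro A B; ext i d; exact d.elim0
    constructor
    · intro W _ hW0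
      exact absurd (hsub W 0) hW0
    · refine ⟨0, ⟨fun d => d.elim0, fun W' _ => le_of_eq (by rw [hsub W' 0])⟩,
        fun W' _ => hsub W' 0⟩
  -- main case D > 0
  have hN : 0 < N := by
    rcases Nat.eq_zero_or_pos N with h | h
    · exfalso
      have h1 := Matrix.rank_le_card_width X
      rw [hX] at h1
      simp only [Fintype.card_fin] at h1
      omega
    · exact h
  have hC : 0 < C := by
    rcases Nat.eq_zero_or_pos C with h | h
    · exfalso
      have := hT1 ⟨0, hN⟩
      subst h
      simp at this
    · exact h
  haveI : Nonempty (Fin C) := Fin.pos_iff_nonempty.mp hC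
  haveI : Nonempty (Fin N) := Fin.pos_iff_nonempty.mp hN
  -- a uniform positive lower bound on the entries of T
  obtain ⟨p, -, hp⟩ := Finset.exists_min_image (Finset.univ ×ˢ Finset.univ)
    (fun q : Fin C × Fin N => T q.1 q.2) (Finset.univ_nonempty.product Finset.univ_nonempty)
  set ε : ℝ := T p.1 p.2 with hεdef
  have hε0 : 0 < ε := hT _ _
  have hεle : ∀ i n, ε ≤ T i n := fun i n => hp (i, n) (by simp)
  -- columns of W.mulVec v sum to zero for W in Z
  have hcol : ∀ (W : Matrix (Fin C) (Fin D) ℝ), (∀ d, ∑ i, W i d = 0) →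
      ∀ v : Fin D → ℝ, ∑ i, W.mulVec v i = 0 := by
    intro W hW v
    simp only [Matrix.mulVec, dotProduct]
    rw [Finset.sum_comm]
    apply Finset.sum_eq_zero
    intro d _
    rw [← Finset.sum_mul, hW d, zero_mul]
  -- the key coercivity bound
  have key : ∀ (W : Matrix (Fin C) (Fin D) ℝ), (∀ d, ∑ i, W i d = 0) →
      ∀ (n : Fin N) (i : Fin C),
        ε * |W.mulVec (fun d => X d n) i| ≤ crossEntropyLoss X T W := by
    intro W hWZ n i
    rw [loss_eq hC X T hT1 W]
    have hterm : ∀ (m : Fin N) (j : Fin C), ε * |W.mulVec (fun d => X d m) j| ≤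
        Real.log (∑ i', Real.exp (W.mulVec (fun d => X d m) i'))
          - ∑ i', T i' m * W.mulVec (fun d => X d m) i' := fun m j =>
      term_lb hC (fun i' => T i' m) _ ε hε0.le (fun i' => hεle i' m) (hT1 m) (hcol W hWZ _) j
    calc ε * |W.mulVec (fun d => X d n) i|
        ≤ Real.log (∑ i', Real.exp (W.mulVec (fun d => X d n) i'))
          - ∑ i', T i' n * W.mulVec (fun d => X d n) i' := hterm n i
      _ ≤ _ := Finset.single_le_sum (f := fun m =>
            Real.log (∑ i', Real.exp (W.mulVec (fun d => X d m) i'))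
              - ∑ i', T i' m * W.mulVec (fun d => X d m) i')
          (fun m _ => le_trans (mul_nonneg hε0.le (abs_nonneg _)) (hterm m i))
          (Finset.mem_univ n)
  have hL0 : ∀ (W : Matrix (Fin C) (Fin D) ℝ), (∀ d, ∑ i, W i d = 0) →
      0 ≤ crossEntropyLoss X T W := by
    intro W hWZ
    exact le_trans (mul_nonneg hε0.le (abs_nonneg _)) (key W hWZ (Classical.arbitrary _) (Classical.arbitrary _))
  -- Part 1
  have part1 : ∀ W : Matrix (Fin C) (Fin D) ℝ, (∀ d, ∑ i, W i d = 0) → W ≠ 0 →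
      Tendsto (fun β : ℝ => crossEntropyLoss X T (β • W)) atTop atTop := by
    intro W hWZ hW0
    have hWX : W * X ≠ 0 := fun h => hW0 (mul_X_inj X hX W h)
    have hex : ∃ n i, W.mulVec (fun d => X d n) i ≠ 0 := by
      by_contra h
      push_neg at h
      apply hWX
      ext i n
      have := h n i
      simpa [Matrix.mul_apply, Matrix.mulVec, dotProduct] using this
    obtain ⟨n, i, hni⟩ := hex
    have hc : 0 < ε * |W.mulVec (fun d => X d n) i| :=
      mul_pos hε0 (abs_pos.mpr hni)
    have hev : (fun β : ℝ => β * (ε * |W.mulVec (fun d => X d n) i|)) ≤ᶠ[atTop]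
        fun β : ℝ => crossEntropyLoss X T (β • W) := by
      filter_upwards [eventually_ge_atTop (0:ℝ)] with β hβ
      have hZβ : ∀ d, ∑ i', (β • W) i' d = 0 := by
        intro d
        simp only [Matrix.smul_apply, smul_eq_mul, ← Finset.mul_sum, hWZ d, mul_zero]
      have := key (β • W) hZβ n i
      have hmv : (β • W).mulVec (fun d => X d n) i = β * W.mulVec (fun d => X d n) i := by
        simp [Matrix.smul_mulVec]
      rw [hmv] at this
      calc β * (ε * |W.mulVec (fun d => X d n) i|)
          = ε * (|β| * |W.mulVec (fun d => X d n) i|) := by rw [abs_of_nonneg hβ]; ring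
        _ = ε * |β * W.mulVec (fun d => X d n) i| := by rw [abs_mul]
        _ ≤ _ := this
    exact tendsto_atTop_mono' atTop hev (Tendsto.atTop_mul_const hc tendsto_id)
  refine ⟨part1, ?_⟩
  -- continuity of the loss
  have hLcont : Continuous (crossEntropyLoss X T) := by
    have hfun : crossEntropyLoss X T = fun W : Matrix (Fin C) (Fin D) ℝ =>
        ∑ n, (Real.log (∑ i, Real.exp (W.mulVec (fun d => X d n) i))
          - ∑ i, T i n * W.mulVec (fun d => X d n) i) := funext (loss_eq hC X T hT1)
    rw [hfun]
    apply continuous_finset_sum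
    intro n _
    have hmv : Continuous fun (W : Matrix (Fin C) (Fin D) ℝ) => W.mulVec (fun d => X d n) :=
      continuous_id.matrix_mulVec continuous_const
    apply Continuous.sub
    · apply Continuous.log
      · exact continuous_finset_sum _ fun i _ =>
          Real.continuous_exp.comp ((continuous_apply i).comp hmv)
      · intro W
        exact (Finset.sum_pos (fun i _ => Real.exp_pos _) Finset.univ_nonempty).ne'
    · exact continuous_finset_sum _ fun i _ => continuous_const.mul ((continuous_apply i).comp hmv)
  -- the multiplication-by-X linear map is antilipschitz
  let φ : Matrix (Fin C) (Fin D) ℝ →ₗ[ℝ] Matrix (Fin C) (Fin N) ℝ :=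
    { toFun := fun W => W * X
      map_add' := fun A B => Matrix.add_mul A B X
      map_smul' := fun c A => Matrix.smul_mul c A X }
  obtain ⟨K, hK0, hKa⟩ := φ.exists_antilipschitzWith
    (LinearMap.ker_eq_bot'.mpr fun W h => mul_X_inj X hX W h)
  have hnormbound : ∀ (W : Matrix (Fin C) (Fin D) ℝ), (∀ d, ∑ i, W i d = 0) →
      ‖W‖ ≤ K * (crossEntropyLoss X T W / ε) := by
    intro W hWZ
    have h1 : ‖W‖ ≤ K * ‖W * X‖ := by
      have := hKa.le_mul_dist W 0
      simpa [φ, dist_zero_right] using this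
    have h2 : ‖W * X‖ ≤ crossEntropyLoss X T W / ε := by
      rw [Matrix.norm_le_iff (div_nonneg (hL0 W hWZ) hε0.le)]
      intro i n
      rw [le_div_iff₀ hε0]
      have := key W hWZ n i
      have hentry : (W * X) i n = W.mulVec (fun d => X d n) i := by
        simp [Matrix.mul_apply, Matrix.mulVec, dotProduct]
      rw [Real.norm_eq_abs, hentry]
      linarith [this]
    calc ‖W‖ ≤ K * ‖W * X‖ := h1
      _ ≤ K * (crossEntropyLoss X T W / ε) := by
          exact mul_le_mul_of_nonneg_left h2 (K.coe_nonneg)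
  -- the sublevel set
  set S : Set (Matrix (Fin C) (Fin D) ℝ) :=
    {W | (∀ d, ∑ i, W i d = 0) ∧ crossEntropyLoss X T W ≤ crossEntropyLoss X T 0} with hSdef
  have h0S : (0 : Matrix (Fin C) (Fin D) ℝ) ∈ S := by
    refine ⟨fun d => by simp, le_refl _⟩
  have hSclosed : IsClosed S := by
    rw [hSdef, Set.setOf_and]
    apply IsClosed.inter
    · have : {W : Matrix (Fin C) (Fin D) ℝ | ∀ d, ∑ i, W i d = 0} =
          ⋂ d, (fun W : Matrix (Fin C) (Fin D) ℝ => ∑ i, W i d) ⁻¹' {0} := by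
        ext W; simp [Set.mem_iInter]
      rw [this]
      exact isClosed_iInter fun d => (isClosed_singleton).preimage
        (continuous_finset_sum _ fun i _ => continuous_id.matrix_elem i d)
    · exact (isClosed_Iic).preimage hLcont
  have hSbounded : Bornology.IsBounded S := by
    apply (Metric.isBounded_closedBall
      (x := (0 : Matrix (Fin C) (Fin D) ℝ)) (r := K * (crossEntropyLoss X T 0 / ε))).subset
    intro W hW
    rw [Metric.mem_closedBall, dist_zero_right]
    calc ‖W‖ ≤ K * (crossEntropyLoss X T W / ε) := hnormbound W hW.1
      _ ≤ K * (crossEntropyLoss X T 0 / ε) := by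
          apply mul_le_mul_of_nonneg_left _ K.coe_nonneg
          gcongr
          exact hW.2
  have hScompact : IsCompact S := Metric.isCompact_of_isClosed_isBounded hSclosed hSbounded
  obtain ⟨W₀, hW₀S, hW₀min⟩ := hScompact.exists_isMinOn ⟨0, h0S⟩ hLcont.continuousOn
  rw [isMinOn_iff] at hW₀min
  have hmin : ∀ W', (∀ d, ∑ i, W' i d = 0) →
      crossEntropyLoss X T W₀ ≤ crossEntropyLoss X T W' := by
    intro W' hW'Z
    rcases le_or_gt (crossEntropyLoss X T W') (crossEntropyLoss X T 0) with h | h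
    · exact hW₀min W' ⟨hW'Z, h⟩
    · exact le_trans (hW₀min 0 h0S) h.le
  refine ⟨W₀, ⟨hW₀S.1, hmin⟩, ?_⟩
  -- uniqueness
  rintro W₁ ⟨hW₁Z, hW₁min⟩
  by_contra hne
  have heq : crossEntropyLoss X T W₁ = crossEntropyLoss X T W₀ :=
    le_antisymm (hW₁min W₀ hW₀S.1) (hmin W₁ hW₁Z)
  set M : Matrix (Fin C) (Fin D) ℝ := (2⁻¹ : ℝ) • (W₁ + W₀) with hM
  have hMZ : ∀ d, ∑ i, M i d = 0 := by
    intro d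
    simp only [hM, Matrix.smul_apply, Matrix.add_apply, smul_eq_mul, ← Finset.mul_sum,
      Finset.sum_add_distrib, hW₁Z d, hW₀S.1 d, add_zero, mul_zero]
  have hWXne : W₁ * X ≠ W₀ * X := by
    intro h
    apply hne
    have h2 : (W₁ - W₀) * X = 0 := by rw [Matrix.sub_mul, h, sub_self]
    exact sub_eq_zero.mp (mul_X_inj X hX _ h2)
  have hmidv : ∀ n : Fin N, M.mulVec (fun d => X d n) = fun i =>
      (W₁.mulVec (fun d => X d n) i + W₀.mulVec (fun d => X d n) i) / 2 := by
    intro n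
    funext i
    rw [hM, Matrix.smul_mulVec, Matrix.add_mulVec]
    simp only [Pi.smul_apply, Pi.add_apply, smul_eq_mul]
    ring
  have hexn : ∃ n : Fin N, (W₁.mulVec fun d => X d n) ≠ (W₀.mulVec fun d => X d n) := by
    by_contra h
    push_neg at h
    apply hWXne
    ext i n
    have := congrFun (h n) i
    simpa [Matrix.mul_apply, Matrix.mulVec, dotProduct] using this
  obtain ⟨n₀, hn₀⟩ := hexn
  have hlt : crossEntropyLoss X T M
      < (crossEntropyLoss X T W₁ + crossEntropyLoss X T W₀) / 2 := by
    rw [loss_eq hC X T hT1 M, loss_eq hC X T hT1 W₁, loss_eq hC X T hT1 W₀]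
    calc ∑ n, (Real.log (∑ i, Real.exp (M.mulVec (fun d => X d n) i))
          - ∑ i, T i n * M.mulVec (fun d => X d n) i)
        < ∑ n, ((Real.log (∑ i, Real.exp (W₁.mulVec (fun d => X d n) i))
              - ∑ i, T i n * W₁.mulVec (fun d => X d n) i)
            + (Real.log (∑ i, Real.exp (W₀.mulVec (fun d => X d n) i))
              - ∑ i, T i n * W₀.mulVec (fun d => X d n) i)) / 2 := by
          apply Finset.sum_lt_sum
          · intro n _
            rw [hmidv n]
            exact mid_term_le hC (fun i => T i n) _ _ (hcol W₁ hW₁Z _) (hcol W₀ hW₀S.1 _)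
          · refine ⟨n₀, Finset.mem_univ n₀, ?_⟩
            rw [hmidv n₀]
            exact mid_term_lt hC (fun i => T i n₀) _ _ hn₀ (hcol W₁ hW₁Z _) (hcol W₀ hW₀S.1 _)
      _ = _ := by rw [← Finset.sum_div, Finset.sum_add_distrib]
  rw [heq] at hlt
  have h1 : crossEntropyLoss X T W₀ ≤ crossEntropyLoss X T M := hmin M hMZ
  linarith
end

section
/- Let K ∈ R^{C×(C−1)} satisfy KᵀK = I_{C−1} and 𝟙ᵀK = 0, and let Q = diag(y) − y yᵀ for a probability vector y with positive entries. Then the smallest eigenvalue of A = Kᵀ Q K equals the smallest eigenvalue of Q restricted to 𝟙^⊥, and satisfies λ_min(KᵀQK) ≥ min_i y_i. Moreover the largest eigenvalue satisfies λ_max(KᵀQK) ≤ tr(Q K Kᵀ) < C. -/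
open Matrix Finset

private lemma quadform_aux {α β : Type*} [Fintype α] [Fintype β]
    (K : Matrix α β ℝ) (M : Matrix α α ℝ) (w : β → ℝ) :
    (K *ᵥ w) ⬝ᵥ (M *ᵥ (K *ᵥ w)) = w ⬝ᵥ ((Kᵀ * M * K) *ᵥ w) := by
  rw [Matrix.mul_assoc, ← mulVec_mulVec, dotProduct_mulVec w, vecMul_transpose,
    mulVec_mulVec]

private lemma diag_quad {β : Type*} [Fintype β] [DecidableEq β] (d c : β → ℝ) :
    c ⬝ᵥ ((Matrix.diagonal d) *ᵥ c) = ∑ i, d i * c i ^ 2 := by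
  simp only [dotProduct, mulVec_diagonal, sq]
  congr 1; ext i; ring

private lemma trace_sq_zero {α : Type*} [Fintype α] [DecidableEq α]
    (M : Matrix α α ℝ) (hMt : Mᵀ = M) (htr : (M * M).trace = 0) : M = 0 := by
  have hsymm : ∀ a b, M a b = M b a := fun a b => by
    nth_rewrite 1 [← hMt]; exact Matrix.transpose_apply M a b
  have h : ∑ i, ∑ j, (M i j) ^ 2 = 0 := by
    rw [← htr]
    simp only [Matrix.trace, Matrix.mul_apply, Matrix.diag_apply, sq]
    exact Finset.sum_congr rfl fun i _ => Finset.sum_congr rfl fun j _ => by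
      rw [hsymm j i]
  ext i j
  have h1 : ∀ i ∈ (univ : Finset α), (0:ℝ) ≤ ∑ j, (M i j)^2 :=
    fun i _ => Finset.sum_nonneg fun j _ => sq_nonneg _
  have h2 := (Finset.sum_eq_zero_iff_of_nonneg h1).1 h i (mem_univ i)
  have h3 := (Finset.sum_eq_zero_iff_of_nonneg (fun k _ => sq_nonneg (M i k))).1 h2 j (mem_univ j)
  simpa using pow_eq_zero_iff (n := 2) (by norm_num) |>.1 h3

private lemma proj_eq {C : ℕ} (hC : 1 < C) (K : Matrix (Fin C) (Fin (C - 1)) ℝ)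
    (hKiso : Kᵀ * K = 1) (hKones : ∀ j, ∑ i, K i j = 0) :
    K * Kᵀ = 1 - (C:ℝ)⁻¹ • Matrix.of (fun _ _ => (1:ℝ)) := by
  set J : Matrix (Fin C) (Fin C) ℝ := Matrix.of (fun _ _ => (1:ℝ)) with hJ
  set P : Matrix (Fin C) (Fin C) ℝ := K * Kᵀ with hP
  set c : ℝ := (C:ℝ)⁻¹ with hc
  have hCne : (C:ℝ) ≠ 0 := by positivity
  have hPP : P * P = P := by
    rw [hP, Matrix.mul_assoc, ← Matrix.mul_assoc Kᵀ, hKiso, Matrix.one_mul]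
  have hPJ : P * J = 0 := by
    ext i j
    simp only [hP, hJ, Matrix.mul_apply, Matrix.zero_apply, Matrix.of_apply, mul_one,
      transpose_apply]
    rw [Finset.sum_comm]
    simp_rw [← Finset.mul_sum]
    simp [hKones]
  have hJP : J * P = 0 := by
    have h0 : (P * J)ᵀ = 0 := by rw [hPJ]; simp
    rw [Matrix.transpose_mul] at h0
    have hPt : Pᵀ = P := by rw [hP, Matrix.transpose_mul, Matrix.transpose_transpose]
    have hJt : Jᵀ = J := by ext i j; simp [hJ]
    rwa [hPt, hJt] at h0
  have hJJ : J * J = (C:ℝ) • J := by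
    ext i j; simp [hJ, Matrix.mul_apply]
  set M : Matrix (Fin C) (Fin C) ℝ := 1 - c • J - P with hM
  have hMJ : M * J = 0 := by
    rw [hM, Matrix.sub_mul, Matrix.sub_mul, Matrix.one_mul, Matrix.smul_mul, hJJ, hPJ,
      smul_smul, inv_mul_cancel₀ hCne, one_smul, sub_self, zero_sub, neg_zero]
  have hMP : M * P = 0 := by
    rw [hM, Matrix.sub_mul, Matrix.sub_mul, Matrix.one_mul, Matrix.smul_mul, hJP, hPP,
      smul_zero, sub_zero, sub_self]
  have hMM : M * M = M := by
    nth_rewrite 2 [hM]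
    rw [Matrix.mul_sub, Matrix.mul_sub, Matrix.mul_one, Matrix.mul_smul, hMJ, hMP,
      smul_zero, sub_zero, sub_zero]
  have hMt : Mᵀ = M := by
    have hPt : Pᵀ = P := by rw [hP, Matrix.transpose_mul, Matrix.transpose_transpose]
    have hJt : Jᵀ = J := by ext i j; simp [hJ]
    rw [hM, Matrix.transpose_sub, Matrix.transpose_sub, Matrix.transpose_one,
      Matrix.transpose_smul, hJt, hPt]
  have htrP : P.trace = (C:ℝ) - 1 := by
    rw [hP, Matrix.trace_mul_comm, hKiso, Matrix.trace_one]
    simp [Nat.cast_sub hC.le]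
  have htrJ : J.trace = (C:ℝ) := by simp [Matrix.trace, Matrix.diag, hJ]
  have htrM : M.trace = 0 := by
    rw [hM, Matrix.trace_sub, Matrix.trace_sub, Matrix.trace_one, Matrix.trace_smul,
      htrJ, htrP]
    simp [hc, inv_mul_cancel₀ hCne]
  have hM0 : M = 0 := trace_sq_zero M hMt (by rw [hMM, htrM])
  rw [hM] at hM0
  exact (sub_eq_zero.1 hM0).symm

private lemma Q_quad {C : ℕ} (y v : Fin C → ℝ) :
    v ⬝ᵥ ((Matrix.diagonal y - Matrix.vecMulVec y y) *ᵥ v)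
      = (∑ i, y i * v i ^ 2) - (∑ i, y i * v i) ^ 2 := by
  rw [Matrix.sub_mulVec, dotProduct_sub]
  congr 1
  · simp only [dotProduct, mulVec_diagonal]
    exact Finset.sum_congr rfl fun i _ => by ring
  · simp only [dotProduct, mulVec, vecMulVec_apply, Matrix.of_apply, sq]
    have h : ∀ x, v x * (∑ j, y x * y j * v j) = (v x * y x) * ∑ j, y j * v j := by
      intro x
      rw [Finset.mul_sum, Finset.mul_sum]
      exact Finset.sum_congr rfl fun j _ => by ring
    simp_rw [h, ← Finset.sum_mul]
    congr 1
    exact Finset.sum_congr rfl fun i _ => by ring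

private lemma min_bound {C : ℕ} (y : Fin C → ℝ) (hy0 : ∀ i, 0 < y i)
    (hy1 : ∑ i, y i = 1) (v : Fin C → ℝ) (hv0 : ∑ i, v i = 0) (hv1 : ∑ i, v i ^ 2 = 1)
    (hne : (univ : Finset (Fin C)).Nonempty) :
    univ.inf' hne y ≤ (∑ i, y i * v i ^ 2) - (∑ i, y i * v i) ^ 2 := by
  set m : ℝ := univ.inf' hne y with hm
  have hmle : ∀ i, m ≤ y i := fun i => Finset.inf'_le y (mem_univ i)
  have hmpos : 0 < m := by
    obtain ⟨i, _, hi⟩ := Finset.exists_mem_eq_inf' hne y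
    rw [hm, hi]; exact hy0 i
  have hCm : (C : ℝ) * m ≤ 1 := by
    calc (C : ℝ) * m = ∑ _i : Fin C, m := by simp [mul_comm]
    _ ≤ ∑ i, y i := Finset.sum_le_sum fun i _ => hmle i
    _ = 1 := hy1
  have hCS := Finset.sum_mul_sq_le_sq_mul_sq univ
    (fun i => Real.sqrt (y i - m)) (fun i => Real.sqrt (y i - m) * v i)
  have hsq : ∀ i, Real.sqrt (y i - m) * Real.sqrt (y i - m) = y i - m :=
    fun i => Real.mul_self_sqrt (by linarith [hmle i])
  have e1 : ∑ i, Real.sqrt (y i - m) * (Real.sqrt (y i - m) * v i) = ∑ i, y i * v i := by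
    have h : ∀ i, Real.sqrt (y i - m) * (Real.sqrt (y i - m) * v i) = (y i - m) * v i :=
      fun i => by rw [← mul_assoc, hsq]
    simp_rw [h, sub_mul, Finset.sum_sub_distrib, ← Finset.mul_sum, hv0, mul_zero, sub_zero]
  have e2 : ∑ i, Real.sqrt (y i - m) ^ 2 = 1 - C * m := by
    have h : ∀ i, Real.sqrt (y i - m) ^ 2 = y i - m := fun i => by rw [sq, hsq]
    simp_rw [h, Finset.sum_sub_distrib, hy1]
    simp [mul_comm]
  have e3 : ∑ i, (Real.sqrt (y i - m) * v i) ^ 2 = (∑ i, y i * v i ^ 2) - m := by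
    have h : ∀ i, (Real.sqrt (y i - m) * v i) ^ 2 = y i * v i ^ 2 - m * v i ^ 2 :=
      fun i => by rw [mul_pow, sq (Real.sqrt _), hsq]; ring
    simp_rw [h, Finset.sum_sub_distrib, ← Finset.mul_sum, hv1, mul_one]
  rw [e1, e2, e3] at hCS
  have ha : m ≤ ∑ i, y i * v i ^ 2 := by
    calc m = ∑ i, m * v i ^ 2 := by rw [← Finset.mul_sum, hv1, mul_one]
    _ ≤ ∑ i, y i * v i ^ 2 := Finset.sum_le_sum fun i _ => by
        have := hmle i; nlinarith [sq_nonneg (v i)]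
  nlinarith [mul_nonneg (mul_nonneg (Nat.cast_nonneg C : (0:ℝ) ≤ C) hmpos.le)
    (sub_nonneg.2 ha)]

private lemma eig_facts {n : Type*} [Fintype n] [DecidableEq n] (A : Matrix n n ℝ)
    (hA : A.IsHermitian) (j : n) :
    (∑ i, (hA.eigenvectorBasis j : n → ℝ) i ^ 2 = 1) ∧
      (hA.eigenvectorBasis j : n → ℝ) ⬝ᵥ (A *ᵥ (hA.eigenvectorBasis j : n → ℝ))
        = hA.eigenvalues j := by
  set w : n → ℝ := (hA.eigenvectorBasis j : n → ℝ) with hw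
  have hsum : ∑ i, w i ^ 2 = 1 := by
    have h1 := hA.eigenvectorBasis.orthonormal.1 j
    rw [EuclideanSpace.norm_eq] at h1
    have h2 := congrArg (· ^ 2) h1
    simp only [one_pow] at h2
    rw [Real.sq_sqrt (Finset.sum_nonneg fun i _ => sq_nonneg _)] at h2
    simpa [Real.norm_eq_abs, sq_abs] using h2
  refine ⟨hsum, ?_⟩
  have hmv : A *ᵥ w = hA.eigenvalues j • w := hA.mulVec_eigenvectorBasis j
  rw [hmv, dotProduct_smul]
  have h3 : w ⬝ᵥ w = 1 := by rw [← hsum]; simp [dotProduct, sq]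
  rw [smul_eq_mul, h3, mul_one]

private lemma spectral_real {n : Type*} [Fintype n] [DecidableEq n] (A : Matrix n n ℝ)
    (hA : A.IsHermitian) :
    A = (hA.eigenvectorUnitary : Matrix n n ℝ) * Matrix.diagonal hA.eigenvalues
      * (hA.eigenvectorUnitary : Matrix n n ℝ)ᵀ := by
  have h := hA.spectral_theorem
  rwa [Unitary.conjStarAlgAut_apply, Matrix.star_eq_conjTranspose,
    conjTranspose_eq_transpose_of_trivial] at h

private lemma unitary_facts {n : Type*} [Fintype n] [DecidableEq n] (A : Matrix n n ℝ)
    (hA : A.IsHermitian) :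
    (hA.eigenvectorUnitary : Matrix n n ℝ)ᵀ * (hA.eigenvectorUnitary : Matrix n n ℝ) = 1 ∧
    (hA.eigenvectorUnitary : Matrix n n ℝ) * (hA.eigenvectorUnitary : Matrix n n ℝ)ᵀ = 1 := by
  have h1 := (Matrix.mem_unitaryGroup_iff).mp hA.eigenvectorUnitary.2
  have h2 := (Matrix.mem_unitaryGroup_iff').mp hA.eigenvectorUnitary.2
  rw [Matrix.star_eq_conjTranspose, conjTranspose_eq_transpose_of_trivial] at h1 h2
  exact ⟨h2, h1⟩

private lemma rayleigh_lb {n : Type*} [Fintype n] [DecidableEq n] (A : Matrix n n ℝ)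
    (hA : A.IsHermitian) (hne : (univ : Finset n).Nonempty) (w : n → ℝ)
    (hw : ∑ i, w i ^ 2 = 1) :
    univ.inf' hne hA.eigenvalues ≤ w ⬝ᵥ (A *ᵥ w) := by
  set U := (hA.eigenvectorUnitary : Matrix n n ℝ) with hU
  obtain ⟨hUU, hUUT⟩ := unitary_facts A hA
  set c : n → ℝ := Uᵀ *ᵥ w with hc
  have hcc : ∑ i, c i ^ 2 = 1 := by
    have h := quadform_aux Uᵀ 1 w
    rw [transpose_transpose, Matrix.mul_one, hUUT, one_mulVec, one_mulVec] at h
    have hdot : w ⬝ᵥ w = 1 := by rw [← hw]; simp [dotProduct, sq]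
    calc ∑ i, c i ^ 2 = c ⬝ᵥ c := by simp [dotProduct, sq]
    _ = 1 := by rw [hc, h, hdot]
  have hquad : w ⬝ᵥ (A *ᵥ w) = ∑ i, hA.eigenvalues i * c i ^ 2 := by
    have h := quadform_aux Uᵀ (Matrix.diagonal hA.eigenvalues) w
    rw [transpose_transpose] at h
    rw [← diag_quad hA.eigenvalues c, hc, h, hU, ← spectral_real A hA]
  rw [hquad]
  calc univ.inf' hne hA.eigenvalues = ∑ i, univ.inf' hne hA.eigenvalues * c i ^ 2 := by
        rw [← Finset.mul_sum, hcc, mul_one]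
  _ ≤ ∑ i, hA.eigenvalues i * c i ^ 2 := Finset.sum_le_sum fun i _ =>
      mul_le_mul_of_nonneg_right (Finset.inf'_le _ (mem_univ i)) (sq_nonneg _)

private lemma trace_eq_sum_eig {n : Type*} [Fintype n] [DecidableEq n] (A : Matrix n n ℝ)
    (hA : A.IsHermitian) : A.trace = ∑ i, hA.eigenvalues i := by
  obtain ⟨hUU, hUUT⟩ := unitary_facts A hA
  conv_lhs => rw [spectral_real A hA]
  rw [Matrix.trace_mul_cycle, hUU, Matrix.one_mul, Matrix.trace_diagonal]

theorem eigenvalue_bounds_KQK {C : ℕ} (hC : 1 < C)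
    (y : Fin C → ℝ) (hy0 : ∀ i, 0 < y i) (hy1 : ∑ i, y i = 1)
    (Q : Matrix (Fin C) (Fin C) ℝ)
    (hQ : Q = Matrix.diagonal y - Matrix.vecMulVec y y)
    (K : Matrix (Fin C) (Fin (C - 1)) ℝ)
    (hKiso : Kᵀ * K = 1) (hKones : ∀ j, ∑ i, K i j = 0)
    (A : Matrix (Fin (C - 1)) (Fin (C - 1)) ℝ) (hA : A = Kᵀ * Q * K)
    (hAh : A.IsHermitian) :
    IsLeast {r : ℝ | ∃ v : Fin C → ℝ, (∑ i, v i = 0) ∧ (∑ i, v i ^ 2 = 1) ∧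
        r = v ⬝ᵥ Q.mulVec v}
      (Finset.univ.inf' (Finset.univ_nonempty_iff.mpr ⟨⟨0, by omega⟩⟩) hAh.eigenvalues) ∧
    (Finset.univ.inf' (Finset.univ_nonempty_iff.mpr ⟨⟨0, by omega⟩⟩) y
      ≤ Finset.univ.inf' (Finset.univ_nonempty_iff.mpr ⟨⟨0, by omega⟩⟩) hAh.eigenvalues) ∧
    (Finset.univ.sup' (Finset.univ_nonempty_iff.mpr ⟨⟨0, by omega⟩⟩) hAh.eigenvalues
      ≤ (Q * K * Kᵀ).trace) ∧
    (Q * K * Kᵀ).trace < C := by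
  have hne : (univ : Finset (Fin (C - 1))).Nonempty :=
    Finset.univ_nonempty_iff.mpr ⟨⟨0, by omega⟩⟩
  have hneC : (univ : Finset (Fin C)).Nonempty :=
    Finset.univ_nonempty_iff.mpr ⟨⟨0, by omega⟩⟩
  -- projection fact
  have hproj : ∀ v : Fin C → ℝ, (∑ i, v i = 0) → (K * Kᵀ) *ᵥ v = v := by
    intro v hv
    rw [proj_eq hC K hKiso hKones, Matrix.sub_mulVec, Matrix.one_mulVec,
      Matrix.smul_mulVec]
    have hJv : (Matrix.of (fun _ _ => (1:ℝ)) : Matrix (Fin C) (Fin C) ℝ) *ᵥ v = 0 := by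
      ext i; simp [mulVec, dotProduct, hv]
    rw [hJv, smul_zero, sub_zero]
  -- quadratic form correspondence
  have hKquad : ∀ w : Fin (C-1) → ℝ, (K *ᵥ w) ⬝ᵥ (Q *ᵥ (K *ᵥ w)) = w ⬝ᵥ (A *ᵥ w) :=
    fun w => by rw [quadform_aux, ← hA]
  have hKsum : ∀ w : Fin (C-1) → ℝ, ∑ i, (K *ᵥ w) i = 0 := by
    intro w
    simp only [mulVec, dotProduct]
    rw [Finset.sum_comm]
    have h : ∀ j, ∑ i, K i j * w j = 0 := by
      intro j; rw [← Finset.sum_mul, hKones, zero_mul]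
    simp [h]
  have hKnorm : ∀ w : Fin (C-1) → ℝ, ∑ i, (K *ᵥ w) i ^ 2 = ∑ i, w i ^ 2 := by
    intro w
    have h := quadform_aux K 1 w
    rw [Matrix.mul_one, hKiso, one_mulVec, one_mulVec] at h
    calc ∑ i, (K *ᵥ w) i ^ 2 = (K *ᵥ w) ⬝ᵥ (K *ᵥ w) := by simp [dotProduct, sq]
    _ = w ⬝ᵥ w := h
    _ = ∑ i, w i ^ 2 := by simp [dotProduct, sq]
  -- membership of each eigenvalue
  have hmem : ∀ j : Fin (C-1), hAh.eigenvalues j ∈ {r : ℝ | ∃ v : Fin C → ℝ,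
      (∑ i, v i = 0) ∧ (∑ i, v i ^ 2 = 1) ∧ r = v ⬝ᵥ Q.mulVec v} := by
    intro j
    obtain ⟨hsum, hquad⟩ := eig_facts A hAh j
    refine ⟨K *ᵥ (hAh.eigenvectorBasis j : Fin (C-1) → ℝ), hKsum _, ?_, ?_⟩
    · rw [hKnorm, hsum]
    · rw [hKquad, hquad]
  -- lower bound on the set
  have hlbA : ∀ r ∈ {r : ℝ | ∃ v : Fin C → ℝ,
      (∑ i, v i = 0) ∧ (∑ i, v i ^ 2 = 1) ∧ r = v ⬝ᵥ Q.mulVec v},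
      univ.inf' hne hAh.eigenvalues ≤ r := by
    rintro r ⟨v, hv0, hv1, rfl⟩
    have hKw : K *ᵥ (Kᵀ *ᵥ v) = v := by rw [mulVec_mulVec]; exact hproj v hv0
    have hw1 : ∑ i, (Kᵀ *ᵥ v) i ^ 2 = 1 := by
      have h := quadform_aux Kᵀ 1 v
      rw [transpose_transpose, Matrix.mul_one, one_mulVec] at h
      rw [hproj v hv0] at h
      calc ∑ i, (Kᵀ *ᵥ v) i ^ 2 = (Kᵀ *ᵥ v) ⬝ᵥ (Kᵀ *ᵥ v) := by simp [dotProduct, sq]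
      _ = v ⬝ᵥ v := h
      _ = 1 := by rw [← hv1]; simp [dotProduct, sq]
    have heq : v ⬝ᵥ Q.mulVec v = (Kᵀ *ᵥ v) ⬝ᵥ (A *ᵥ (Kᵀ *ᵥ v)) := by
      conv_lhs => rw [← hKw]
      exact hKquad (Kᵀ *ᵥ v)
    rw [heq]
    exact rayleigh_lb A hAh hne (Kᵀ *ᵥ v) hw1
  have hisleast : IsLeast {r : ℝ | ∃ v : Fin C → ℝ, (∑ i, v i = 0) ∧ (∑ i, v i ^ 2 = 1) ∧
      r = v ⬝ᵥ Q.mulVec v} (univ.inf' hne hAh.eigenvalues) := by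
    constructor
    · obtain ⟨j, _, hj⟩ := Finset.exists_mem_eq_inf' hne hAh.eigenvalues
      rw [hj]; exact hmem j
    · exact hlbA
  -- lower bound min y on the set
  have hSlb : ∀ r ∈ {r : ℝ | ∃ v : Fin C → ℝ,
      (∑ i, v i = 0) ∧ (∑ i, v i ^ 2 = 1) ∧ r = v ⬝ᵥ Q.mulVec v},
      univ.inf' hneC y ≤ r := by
    rintro r ⟨v, hv0, hv1, rfl⟩
    have : v ⬝ᵥ Q.mulVec v = (∑ i, y i * v i ^ 2) - (∑ i, y i * v i) ^ 2 := by
      rw [hQ]; exact Q_quad y v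
    rw [this]
    exact min_bound y hy0 hy1 v hv0 hv1 hneC
  have hpart2 : univ.inf' hneC y ≤ univ.inf' hne hAh.eigenvalues := by
    obtain ⟨j, _, hj⟩ := Finset.exists_mem_eq_inf' hne hAh.eigenvalues
    rw [hj]
    exact hSlb _ (hmem j)
  -- positivity of eigenvalues
  have hypos : 0 < univ.inf' hneC y := by
    obtain ⟨i, _, hi⟩ := Finset.exists_mem_eq_inf' hneC y
    rw [hi]; exact hy0 i
  have heigpos : ∀ j, 0 < hAh.eigenvalues j := fun j =>
    lt_of_lt_of_le hypos (hSlb _ (hmem j))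
  -- trace identity
  have htrA : (Q * K * Kᵀ).trace = A.trace := by
    rw [hA, Matrix.trace_mul_comm (Q * K) Kᵀ, ← Matrix.mul_assoc]
  have hpart3 : univ.sup' hne hAh.eigenvalues ≤ (Q * K * Kᵀ).trace := by
    rw [htrA, trace_eq_sum_eig A hAh]
    obtain ⟨j, _, hj⟩ := Finset.exists_mem_eq_sup' hne hAh.eigenvalues
    rw [hj]
    exact Finset.single_le_sum (fun i _ => (heigpos i).le) (mem_univ j)
  -- trace value
  have htrQJ : (Q * (Matrix.of (fun _ _ => (1:ℝ)) : Matrix (Fin C) (Fin C) ℝ)).trace = 0 := by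
    have h : ∀ i, ∑ k, Q i k = 0 := by
      intro i
      rw [hQ]
      simp only [Matrix.sub_apply, Matrix.diagonal_apply, vecMulVec_apply]
      rw [Finset.sum_sub_distrib]
      simp [Finset.sum_ite_eq, ← Finset.mul_sum, hy1]
    simp only [Matrix.trace, Matrix.diag_apply, Matrix.mul_apply, Matrix.of_apply, mul_one]
    simp [h]
  have htrQ : Q.trace = 1 - ∑ i, y i ^ 2 := by
    rw [hQ, Matrix.trace_sub, Matrix.trace_diagonal, hy1]
    congr 1
    simp [Matrix.trace, Matrix.diag, vecMulVec_apply, sq]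
  have hpart4 : (Q * K * Kᵀ).trace < C := by
    have hval : (Q * K * Kᵀ).trace = 1 - ∑ i, y i ^ 2 := by
      rw [Matrix.mul_assoc, proj_eq hC K hKiso hKones, Matrix.mul_sub, Matrix.mul_one,
        Matrix.mul_smul, Matrix.trace_sub, Matrix.trace_smul, htrQJ, htrQ]
      simp
    rw [hval]
    have hsq : 0 < ∑ i, y i ^ 2 :=
      Finset.sum_pos (fun i _ => pow_pos (hy0 i) 2) hneC
    have hC1 : (1:ℝ) < C := by exact_mod_cast hC
    linarith
  exact ⟨hisleast, hpart2, hpart3, hpart4⟩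
end
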